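/- Let α > 0, k ∈ ℤ₊, let (Γ_j)_{j≥1} be the arrival times of a unit-rate Poisson process, and let (T_j)_{j≥1} be i.i.d. random elements of a probability space (E, 𝓔, m), independent of (Γ_j). Let f : E^k → [0,∞] be measurable and vanish when any two coordinates are equal. Then the event { ⋁_{j ∈ 𝓓_k} f(T_{j_1},...,T_{j_k}) (Γ_{j_1} ⋯ Γ_{j_k})^{-1/α} < ∞ } has probability 0 or 1, where 𝓓_k is the set of k-tuples of distinct positive integers. -/

import Mathlib

open MeasureTheory Filter ProbabilityTheory
open scoped ENNReal

open Set
open scoped symmDiff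

def blockSwap (n m : ℕ) : ℕ := if m < n then m + n else if m < 2 * n then m - n else m

lemma blockSwap_involutive (n : ℕ) : Function.Involutive (blockSwap n) := by
  intro m; unfold blockSwap; split_ifs <;> omega

lemma blockSwap_injective (n : ℕ) : Function.Injective (blockSwap n) :=
  (blockSwap_involutive n).injective

lemma blockSwap_of_lt {n m : ℕ} (h : m < n) : blockSwap n m = m + n := if_pos h

lemma blockSwap_of_ge {n m : ℕ} (h : 2 * n ≤ m) : blockSwap n m = m := by
  unfold blockSwap; split_ifs <;> omega

lemma blockSwap_lt_iff {n m : ℕ} : blockSwap n m < 2 * n ↔ m < 2 * n := by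
  unfold blockSwap; split_ifs <;> omega

lemma blockSwap_image_range {n j : ℕ} (h : 2 * n ≤ j) :
    (Finset.range j).image (blockSwap n) = Finset.range j := by
  apply Finset.eq_of_subset_of_card_le
  · intro x hx
    simp only [Finset.mem_image, Finset.mem_range] at *
    obtain ⟨y, hy, rfl⟩ := hx
    unfold blockSwap; split_ifs <;> omega
  · rw [Finset.card_image_of_injective _ (blockSwap_injective n), Finset.card_range]

/-- Comparison of the LePage supremum under a block swap of the indices. -/
lemma lepage_comparison {E : Type*} (α : ℝ) (hα : 0 < α) (k : ℕ)
    (f : (Fin k → E) → ℝ≥0∞) (n : ℕ) (hn : 0 < n) (x : ℕ → ℝ × E)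
    (hpos : ∀ l, 0 < (x l).1) :
    ∃ K : ℝ≥0∞, K ≠ ⊤ ∧
      (⨆ j : {j : Fin k → ℕ // Function.Injective j},
        f (fun i => ((x ∘ blockSwap n) (j.1 i)).2) *
          (∏ i, ENNReal.ofReal
            (∑ l ∈ Finset.range (j.1 i + 1), ((x ∘ blockSwap n) l).1)) ^ (-(1/α)))
      ≤ K * (⨆ j : {j : Fin k → ℕ // Function.Injective j},
        f (fun i => (x (j.1 i)).2) *
          (∏ i, ENNReal.ofReal (∑ l ∈ Finset.range (j.1 i + 1), (x l).1)) ^ (-(1/α))) := by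
  classical
  set σ := blockSwap n with hσ
  set Γx : ℕ → ℝ := fun j => ∑ l ∈ Finset.range (j + 1), (x l).1 with hΓx
  set Γy : ℕ → ℝ := fun j => ∑ l ∈ Finset.range (j + 1), ((x ∘ σ) l).1 with hΓy
  have h2n : 0 < 2 * n := by omega
  have hne : (Finset.range (2 * n)).Nonempty := ⟨0, Finset.mem_range.mpr h2n⟩
  set c : ℝ := (Finset.range (2 * n)).inf' hne (fun l => (x l).1) with hc
  set C : ℝ := ∑ l ∈ Finset.range (2 * n), (x l).1 with hC
  have hc_pos : 0 < c := by
    rw [hc, Finset.lt_inf'_iff]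
    exact fun l _ => hpos l
  have hcle : ∀ m, m < 2 * n → c ≤ (x m).1 := fun m hm =>
    Finset.inf'_le _ (Finset.mem_range.mpr hm)
  have hC_pos : 0 < C := Finset.sum_pos (fun l _ => hpos l) hne
  have hcC : c ≤ C :=
    le_trans (hcle 0 h2n)
      (Finset.single_le_sum (fun l _ => (hpos l).le) (Finset.mem_range.mpr h2n))
  -- (a) the sums agree beyond the swapped blocks
  have ha : ∀ j, 2 * n ≤ j + 1 → Γy j = Γx j := by
    intro j hj
    have h1 : Γy j = ∑ l ∈ (Finset.range (j + 1)).image σ, (x l).1 := by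
      rw [Finset.sum_image (fun a _ b _ h => blockSwap_injective n h)]
      rfl
    rw [h1, hσ, blockSwap_image_range hj]
  -- positivity and bounds
  have hbx : ∀ j, 0 < Γx j :=
    fun j => Finset.sum_pos (fun l _ => hpos l) ⟨0, Finset.mem_range.mpr (Nat.succ_pos j)⟩
  have hby : ∀ j, 0 < Γy j :=
    fun j => Finset.sum_pos (fun l _ => hpos (σ l)) ⟨0, Finset.mem_range.mpr (Nat.succ_pos j)⟩
  have hcx : ∀ j, c ≤ Γx j := fun j =>
    le_trans (hcle 0 h2n)
      (Finset.single_le_sum (f := fun l => (x l).1) (fun l _ => (hpos l).le)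
        (Finset.mem_range.mpr (Nat.succ_pos j)))
  have hcy : ∀ j, c ≤ Γy j := by
    intro j
    have h0 : σ 0 < 2 * n := by
      rw [hσ, blockSwap_of_lt hn]; omega
    exact le_trans (hcle _ h0)
      (Finset.single_le_sum (f := fun l => ((x ∘ σ) l).1) (fun l _ => (hpos (σ l)).le)
        (Finset.mem_range.mpr (Nat.succ_pos j)))
  have hdx : ∀ j, j < 2 * n → Γx j ≤ C := by
    intro j hj
    exact Finset.sum_le_sum_of_subset_of_nonneg
      (Finset.range_subset_range.mpr (by omega)) (fun l _ _ => (hpos l).le)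
  have hdy : ∀ j, j < 2 * n → Γy j ≤ C := by
    intro j hj
    have h1 : Γy j ≤ ∑ l ∈ Finset.range (2 * n), ((x ∘ σ) l).1 :=
      Finset.sum_le_sum_of_subset_of_nonneg
        (Finset.range_subset_range.mpr (by omega)) (fun l _ _ => (hpos (σ l)).le)
    have h2 : ∑ l ∈ Finset.range (2 * n), ((x ∘ σ) l).1 = C := by
      have h3 : ∑ l ∈ Finset.range (2 * n), ((x ∘ σ) l).1
          = ∑ l ∈ (Finset.range (2 * n)).image σ, (x l).1 := by
        rw [Finset.sum_image (fun a _ b _ h => blockSwap_injective n h)]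
        rfl
      rw [h3, hσ, blockSwap_image_range (le_refl (2 * n))]
    rw [← h2]; exact h1
  -- the constant
  refine ⟨(ENNReal.ofReal (c / C) ^ k) ^ (-(1/α)), ?_, ?_⟩
  · rw [ENNReal.rpow_neg, Ne, ENNReal.inv_eq_top]
    refine (ENNReal.rpow_pos ?_ ?_).ne'
    · exact ENNReal.pow_pos (ENNReal.ofReal_pos.mpr (div_pos hc_pos hC_pos)) k
    · exact ENNReal.pow_ne_top ENNReal.ofReal_ne_top
  · refine iSup_le fun j => ?_
    set j' : Fin k → ℕ := fun i => σ (j.1 i) with hj'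
    have hj'inj : Function.Injective j' := (blockSwap_injective n).comp j.2
    -- claim 1 : factorwise comparison
    have claim1 : ∀ i : Fin k,
        ENNReal.ofReal (c / C) * ENNReal.ofReal (Γx (j' i)) ≤ ENNReal.ofReal (Γy (j.1 i)) := by
      intro i
      rcases lt_or_ge (j.1 i) (2 * n) with h | h
      · have hj'lt : j' i < 2 * n := by
          rw [hj']; exact blockSwap_lt_iff.mpr h
        calc ENNReal.ofReal (c / C) * ENNReal.ofReal (Γx (j' i))
            = ENNReal.ofReal (c / C * Γx (j' i)) :=
              (ENNReal.ofReal_mul (by positivity)).symm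
          _ ≤ ENNReal.ofReal (c / C * C) := by
              refine ENNReal.ofReal_le_ofReal ?_
              exact mul_le_mul_of_nonneg_left (hdx _ hj'lt) (by positivity)
          _ = ENNReal.ofReal c := by rw [div_mul_cancel₀ _ hC_pos.ne']
          _ ≤ ENNReal.ofReal (Γy (j.1 i)) := ENNReal.ofReal_le_ofReal (hcy _)
      · have heq : j' i = j.1 i := by
          simp only [hj', hσ]; exact blockSwap_of_ge h
        have hΓeq : Γy (j.1 i) = Γx (j.1 i) := ha _ (by omega)
        rw [heq, hΓeq]
        calc ENNReal.ofReal (c / C) * ENNReal.ofReal (Γx (j.1 i))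
            ≤ 1 * ENNReal.ofReal (Γx (j.1 i)) := by
              refine mul_le_mul' ?_ le_rfl
              rw [← ENNReal.ofReal_one]
              exact ENNReal.ofReal_le_ofReal (div_le_one_of_le₀ hcC hC_pos.le)
          _ = ENNReal.ofReal (Γx (j.1 i)) := one_mul _
    -- claim 2 : weight comparison after rpow
    have claim2 : (∏ i, ENNReal.ofReal (Γy (j.1 i))) ^ (-(1/α)) ≤
        (ENNReal.ofReal (c / C) ^ k) ^ (-(1/α)) *
          (∏ i, ENNReal.ofReal (Γx (j' i))) ^ (-(1/α)) := by
      have hprod : ENNReal.ofReal (c / C) ^ k * ∏ i, ENNReal.ofReal (Γx (j' i)) ≤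
          ∏ i, ENNReal.ofReal (Γy (j.1 i)) := by
        calc ENNReal.ofReal (c / C) ^ k * ∏ i, ENNReal.ofReal (Γx (j' i))
            = ∏ i : Fin k, (ENNReal.ofReal (c / C) * ENNReal.ofReal (Γx (j' i))) := by
              rw [Finset.prod_mul_distrib, Finset.prod_const, Finset.card_univ, Fintype.card_fin]
          _ ≤ ∏ i, ENNReal.ofReal (Γy (j.1 i)) := Finset.prod_le_prod' (fun i _ => claim1 i)
      have hanti : ∀ a b : ℝ≥0∞, a ≤ b → b ^ (-(1/α)) ≤ a ^ (-(1/α)) := by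
        intro a b hab
        rw [ENNReal.rpow_neg, ENNReal.rpow_neg]
        exact ENNReal.inv_le_inv.mpr (ENNReal.rpow_le_rpow hab (by positivity))
      have h1 := hanti _ _ hprod
      refine le_trans h1 ?_
      rw [ENNReal.mul_rpow_of_ne_zero]
      · exact (pow_ne_zero _ (ENNReal.ofReal_pos.mpr (div_pos hc_pos hC_pos)).ne')
      · rw [Finset.prod_ne_zero_iff]
        exact fun i _ => (ENNReal.ofReal_pos.mpr (hbx _)).ne'
    -- conclude
    have harg : (fun i => ((x ∘ σ) (j.1 i)).2) = fun i => (x (j' i)).2 := rfl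
    calc f (fun i => ((x ∘ σ) (j.1 i)).2) *
          (∏ i, ENNReal.ofReal (∑ l ∈ Finset.range (j.1 i + 1), ((x ∘ σ) l).1)) ^ (-(1/α))
        = f (fun i => (x (j' i)).2) * (∏ i, ENNReal.ofReal (Γy (j.1 i))) ^ (-(1/α)) := by
          rw [harg]
      _ ≤ f (fun i => (x (j' i)).2) *
          ((ENNReal.ofReal (c / C) ^ k) ^ (-(1/α)) *
            (∏ i, ENNReal.ofReal (Γx (j' i))) ^ (-(1/α))) := mul_le_mul' le_rfl claim2
      _ = (ENNReal.ofReal (c / C) ^ k) ^ (-(1/α)) *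
          (f (fun i => (x (j' i)).2) * (∏ i, ENNReal.ofReal (Γx (j' i))) ^ (-(1/α))) := by
          ring
      _ ≤ (ENNReal.ofReal (c / C) ^ k) ^ (-(1/α)) *
          (⨆ j : {j : Fin k → ℕ // Function.Injective j},
            f (fun i => (x (j.1 i)).2) *
              (∏ i, ENNReal.ofReal (∑ l ∈ Finset.range (j.1 i + 1), (x l).1)) ^ (-(1/α))) := by
          refine mul_le_mul' le_rfl ?_
          exact le_iSup (fun j : {j : Fin k → ℕ // Function.Injective j} =>
            f (fun i => (x (j.1 i)).2) *
              (∏ i, ENNReal.ofReal (∑ l ∈ Finset.range (j.1 i + 1), (x l).1)) ^ (-(1/α)))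
            ⟨j', hj'inj⟩

theorem hewittSavage {β : Type*} [MeasurableSpace β] (μ : Measure (ℕ → β))
    [IsProbabilityMeasure μ]
    (hindep : iIndepFun (fun n (x : ℕ → β) => x n) μ)
    (hid : ∀ i, μ.map (fun x => x i) = μ.map (fun x => x 0))
    (S : Set (ℕ → β)) (hS : MeasurableSet S)
    (hinv : ∀ n, 0 < n → μ (S ∆ ((fun x => x ∘ blockSwap n) ⁻¹' S)) = 0) :
    μ S = 0 ∨ μ S = 1 := by
  classical
  have hΦmeas : ∀ n, Measurable (fun x : ℕ → β => x ∘ blockSwap n) := fun n =>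
    measurable_pi_lambda _ (fun i => measurable_pi_apply _)
  -- the law `μ` is invariant under the block swap
  have hmap : ∀ n, μ.map (fun x => x ∘ blockSwap n) = μ := by
    intro n
    refine ext_of_generate_finite _ generateFrom_squareCylinders.symm
      (isPiSystem_squareCylinders (fun i => MeasurableSpace.isPiSystem_measurableSet)
        (fun i => MeasurableSet.univ)) ?_ (by simp [Measure.map_apply (hΦmeas n)])
    rintro s ⟨I, t, ht, rfl⟩
    have htm : ∀ i, MeasurableSet (t i) := fun i => ht i (mem_univ i)
    have hpimeas : MeasurableSet ((I : Set ℕ).pi t) :=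
      MeasurableSet.pi (Finset.countable_toSet I) (fun i _ => htm i)
    rw [Measure.map_apply (hΦmeas n) hpimeas]
    have h1 : (fun x : ℕ → β => x ∘ blockSwap n) ⁻¹' ((I : Set ℕ).pi t) =
        ⋂ j ∈ I.image (blockSwap n), (fun x : ℕ → β => x j) ⁻¹' t (blockSwap n j) := by
      rw [Finset.set_biInter_finset_image]
      ext x
      simp only [Set.mem_preimage, Set.mem_pi, Finset.mem_coe, Set.mem_iInter, Function.comp]
      refine forall_congr' fun i => imp_congr Iff.rfl ?_
      rw [blockSwap_involutive n i]
    have h2 : (I : Set ℕ).pi t = ⋂ i ∈ I, (fun x : ℕ → β => x i) ⁻¹' t i := by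
      ext x; simp [Set.pi_def]
    rw [h1, h2,
      hindep.measure_inter_preimage_eq_mul (I.image (blockSwap n))
        (sets := fun j => t (blockSwap n j)) (fun j _ => htm _),
      hindep.measure_inter_preimage_eq_mul I (sets := t) (fun i _ => htm i),
      Finset.prod_image (fun i _ j _ h => blockSwap_injective n h)]
    refine Finset.prod_congr rfl fun i _ => ?_
    rw [blockSwap_involutive n i]
    have e1 : μ ((fun x : ℕ → β => x (blockSwap n i)) ⁻¹' t i) =
        (μ.map (fun x : ℕ → β => x (blockSwap n i))) (t i) := by
      rw [Measure.map_apply (measurable_pi_apply _) (htm i)]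
    have e2 : μ ((fun x : ℕ → β => x i) ⁻¹' t i) =
        (μ.map (fun x : ℕ → β => x i)) (t i) := by
      rw [Measure.map_apply (measurable_pi_apply _) (htm i)]
    rw [e1, e2, hid, hid i]
  have hΦpre : ∀ n (U : Set (ℕ → β)), MeasurableSet U →
      μ ((fun x : ℕ → β => x ∘ blockSwap n) ⁻¹' U) = μ U := by
    intro n U hU
    conv_rhs => rw [← hmap n]
    rw [Measure.map_apply (hΦmeas n) hU]
  -- measure-dense set algebra of cylinders
  have halg : IsSetAlgebra (measurableCylinders fun _ : ℕ => β) :=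
    ⟨empty_mem_measurableCylinders _, fun s hs => compl_mem_measurableCylinders hs,
      fun s t hs ht => union_mem_measurableCylinders hs ht⟩
  have hdense := Measure.MeasureDense.of_generateFrom_isSetAlgebra_finite (μ := μ) halg
    generateFrom_measurableCylinders.symm
  -- main estimate: μ S ≤ μ S * μ S
  have hmain : μ S ≤ μ S * μ S := by
    refine ENNReal.le_of_forall_pos_le_add fun ε hε _ => ?_
    set δ : ℝ := min ((ε : ℝ) / 5) 1 with hδdef
    have hδpos : 0 < δ := lt_min (by positivity) one_pos
    obtain ⟨t, ht, hμst⟩ := hdense.approx S hS (measure_ne_top μ S) δ hδpos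
    obtain ⟨I, B, hB, rfl⟩ := (mem_measurableCylinders t).mp ht
    set n : ℕ := I.sup id + 1 with hn
    have hIlt : ∀ i ∈ I, i < n := fun i hi =>
      Nat.lt_succ_of_le (Finset.le_sup (f := id) hi)
    set Φ : (ℕ → β) → (ℕ → β) := fun x => x ∘ blockSwap n with hΦ
    have hcylmeas : MeasurableSet (cylinder I B) := MeasurableSet.cylinder (α := fun _ : ℕ => β) I hB
    -- the swapped cylinder
    have hcyl : Φ ⁻¹' (cylinder I B) = (fun (x : ℕ → β) (i : I) => x ((i : ℕ) + n)) ⁻¹' B := by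
      ext x
      simp only [Set.mem_preimage, mem_cylinder, hΦ]
      have : (Finset.restrict I (x ∘ blockSwap n)) = fun i : I => x ((i : ℕ) + n) := by
        funext i
        simp only [Finset.restrict_def, Function.comp]
        rw [blockSwap_of_lt (hIlt i i.2)]
      rw [this]
    -- independence of the cylinder and its swap
    have hkey : μ (cylinder I B ∩ Φ ⁻¹' (cylinder I B)) = μ (cylinder I B) * μ (cylinder I B) := by
      set J : Finset ℕ := I.image (· + n) with hJ
      have hIJ : Disjoint I J := by
        rw [Finset.disjoint_left]
        intro a haI haJ
        obtain ⟨b, hb, rfl⟩ := Finset.mem_image.mp haJ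
        exact absurd (hIlt _ haI) (by omega)
      have hind := hindep.indepFun_finset I J hIJ (fun i => measurable_pi_apply i)
      have hmem : ∀ i : I, (i : ℕ) + n ∈ J := fun i => Finset.mem_image_of_mem _ i.2
      set g : (∀ _ : J, β) → (∀ _ : I, β) := fun y i => y ⟨(i : ℕ) + n, hmem i⟩ with hg
      have hgmeas : Measurable g :=
        measurable_pi_lambda _ (fun i => measurable_pi_apply _)
      have hind2 : IndepFun (fun x : ℕ → β => fun i : I => x i)
          (fun x : ℕ → β => fun i : I => x ((i : ℕ) + n)) μ :=
        hind.comp measurable_id hgmeas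
      have := hind2.measure_inter_preimage_eq_mul B B hB hB
      have hpre1 : (fun x : ℕ → β => fun i : I => x i) ⁻¹' B = cylinder I B := rfl
      rw [hpre1] at this
      rw [hcyl, this]
      congr 1
      rw [← hcyl, hΦpre n _ hcylmeas]
    -- arithmetic
    have hd1 : ENNReal.ofReal δ ≤ 1 := by
      rw [← ENNReal.ofReal_one]
      exact ENNReal.ofReal_le_ofReal (min_le_right _ _)
    have ha1 : μ S ≤ 1 := prob_le_one
    have hn0 : 0 < n := Nat.succ_pos _
    have hinvn : μ (S ∆ (Φ ⁻¹' S)) = 0 := hinv n hn0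
    have hdiff0 : μ (S \ Φ ⁻¹' S) = 0 :=
      le_antisymm (le_trans (measure_mono (by rw [Set.symmDiff_def]; exact Set.subset_union_left))
        hinvn.le) zero_le
    have c1 : μ S ≤ μ (S ∩ Φ ⁻¹' S) := by
      calc μ S ≤ μ ((S ∩ Φ ⁻¹' S) ∪ (S \ Φ ⁻¹' S)) := by
                refine measure_mono fun x hx => ?_
                by_cases h : x ∈ Φ ⁻¹' S
                · exact Or.inl ⟨hx, h⟩
                · exact Or.inr ⟨hx, h⟩
        _ ≤ μ (S ∩ Φ ⁻¹' S) + μ (S \ Φ ⁻¹' S) := measure_union_le _ _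
        _ = μ (S ∩ Φ ⁻¹' S) := by rw [hdiff0, add_zero]
    have hSd : μ (S \ cylinder I B) ≤ ENNReal.ofReal δ :=
      le_trans (measure_mono (by rw [Set.symmDiff_def]; exact Set.subset_union_left)) hμst.le
    have hdS : μ (cylinder I B \ S) ≤ ENNReal.ofReal δ :=
      le_trans (measure_mono (by rw [Set.symmDiff_def]; exact Set.subset_union_right)) hμst.le
    have c2 : μ (S ∩ Φ ⁻¹' S) ≤
        μ (cylinder I B) * μ (cylinder I B) + ENNReal.ofReal δ + ENNReal.ofReal δ := by
      have hsub : S ∩ Φ ⁻¹' S ⊆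
          (cylinder I B ∩ Φ ⁻¹' cylinder I B) ∪ (S \ cylinder I B)
            ∪ (Φ ⁻¹' S \ Φ ⁻¹' cylinder I B) := by
        intro x hx
        by_cases h1 : x ∈ cylinder I B
        · by_cases h2 : x ∈ Φ ⁻¹' cylinder I B
          · exact Or.inl (Or.inl ⟨h1, h2⟩)
          · exact Or.inr ⟨hx.2, h2⟩
        · exact Or.inl (Or.inr ⟨hx.1, h1⟩)
      calc μ (S ∩ Φ ⁻¹' S) ≤
          μ ((cylinder I B ∩ Φ ⁻¹' cylinder I B) ∪ (S \ cylinder I B)) +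
            μ (Φ ⁻¹' S \ Φ ⁻¹' cylinder I B) :=
            le_trans (measure_mono hsub) (measure_union_le _ _)
        _ ≤ μ (cylinder I B ∩ Φ ⁻¹' cylinder I B) + μ (S \ cylinder I B) +
            μ (Φ ⁻¹' S \ Φ ⁻¹' cylinder I B) :=
            add_le_add (measure_union_le _ _) le_rfl
        _ ≤ μ (cylinder I B) * μ (cylinder I B) + ENNReal.ofReal δ + ENNReal.ofReal δ := by
            have : μ (Φ ⁻¹' S \ Φ ⁻¹' cylinder I B) = μ (S \ cylinder I B) := by
              rw [← Set.preimage_diff, hΦpre n _ (hS.diff hcylmeas)]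
            rw [hkey, this]
            exact add_le_add (add_le_add le_rfl hSd) hSd
    have c3 : μ (cylinder I B) ≤ μ S + ENNReal.ofReal δ := by
      calc μ (cylinder I B) ≤ μ ((cylinder I B ∩ S) ∪ (cylinder I B \ S)) := by
            refine measure_mono fun x hx => ?_
            by_cases h : x ∈ S
            · exact Or.inl ⟨hx, h⟩
            · exact Or.inr ⟨hx, h⟩
        _ ≤ μ (cylinder I B ∩ S) + μ (cylinder I B \ S) := measure_union_le _ _
        _ ≤ μ S + ENNReal.ofReal δ :=
            add_le_add (measure_mono Set.inter_subset_right) hdS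
    -- put the pieces together
    have hb2 : μ (cylinder I B) * μ (cylinder I B) ≤
        μ S * μ S + 3 * ENNReal.ofReal δ := by
      calc μ (cylinder I B) * μ (cylinder I B) ≤
          (μ S + ENNReal.ofReal δ) * (μ S + ENNReal.ofReal δ) := mul_le_mul' c3 c3
        _ = μ S * μ S + (μ S * ENNReal.ofReal δ + ENNReal.ofReal δ * μ S +
            ENNReal.ofReal δ * ENNReal.ofReal δ) := by ring
        _ ≤ μ S * μ S + 3 * ENNReal.ofReal δ := by
            refine add_le_add le_rfl ?_
            have e1 : μ S * ENNReal.ofReal δ ≤ ENNReal.ofReal δ := by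
              calc μ S * ENNReal.ofReal δ ≤ 1 * ENNReal.ofReal δ := mul_le_mul' ha1 le_rfl
                _ = ENNReal.ofReal δ := one_mul _
            have e2 : ENNReal.ofReal δ * μ S ≤ ENNReal.ofReal δ := by
              calc ENNReal.ofReal δ * μ S ≤ ENNReal.ofReal δ * 1 := mul_le_mul' le_rfl ha1
                _ = ENNReal.ofReal δ := mul_one _
            have e3 : ENNReal.ofReal δ * ENNReal.ofReal δ ≤ ENNReal.ofReal δ := by
              calc ENNReal.ofReal δ * ENNReal.ofReal δ ≤ 1 * ENNReal.ofReal δ :=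
                    mul_le_mul' hd1 le_rfl
                _ = ENNReal.ofReal δ := one_mul _
            calc μ S * ENNReal.ofReal δ + ENNReal.ofReal δ * μ S +
                ENNReal.ofReal δ * ENNReal.ofReal δ ≤
                ENNReal.ofReal δ + ENNReal.ofReal δ + ENNReal.ofReal δ :=
                  add_le_add (add_le_add e1 e2) e3
              _ = 3 * ENNReal.ofReal δ := by ring
    have h5d : 5 * ENNReal.ofReal δ ≤ (ε : ℝ≥0∞) := by
      have : (5 : ℝ≥0∞) * ENNReal.ofReal δ = ENNReal.ofReal (5 * δ) := by
        rw [ENNReal.ofReal_mul (by norm_num)]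
        norm_num
      rw [this]
      calc ENNReal.ofReal (5 * δ) ≤ ENNReal.ofReal (5 * ((ε : ℝ) / 5)) :=
            ENNReal.ofReal_le_ofReal (by
              have := min_le_left ((ε : ℝ) / 5) 1
              nlinarith)
        _ = ENNReal.ofReal (ε : ℝ) := by
              rw [mul_div_cancel₀]
              norm_num
        _ = (ε : ℝ≥0∞) := ENNReal.ofReal_coe_nnreal
    calc μ S ≤ μ (S ∩ Φ ⁻¹' S) := c1
      _ ≤ μ (cylinder I B) * μ (cylinder I B) + ENNReal.ofReal δ + ENNReal.ofReal δ := c2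
      _ ≤ μ S * μ S + 3 * ENNReal.ofReal δ + ENNReal.ofReal δ + ENNReal.ofReal δ := by
          exact add_le_add (add_le_add hb2 le_rfl) le_rfl
      _ = μ S * μ S + 5 * ENNReal.ofReal δ := by ring
      _ ≤ μ S * μ S + ε := add_le_add le_rfl h5d
  -- conclude
  have heq : μ S * μ S = μ S := by
    refine le_antisymm ?_ hmain
    calc μ S * μ S ≤ 1 * μ S := mul_le_mul' prob_le_one le_rfl
      _ = μ S := one_mul _
  rcases eq_or_ne (μ S) 0 with h0 | h0
  · exact Or.inl h0
  · right
    have : μ S * μ S = μ S * 1 := by rw [heq, mul_one]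
    exact ((ENNReal.mul_right_inj h0 (measure_ne_top μ S)).mp this)

/-- Zero-one law for finiteness of the LePage supremum of a multiple extremal integral:
with `(Γ_j)` unit-rate Poisson arrival times independent of the i.i.d. sequence `(T_j)`,
and `f : E^k → [0,∞]` measurable vanishing on the diagonals, the event
`{⋁_{j ∈ 𝓓_k} f(T_{j_1},…,T_{j_k}) (Γ_{j_1}⋯Γ_{j_k})^{-1/α} < ∞}`
has probability `0` or `1`. -/
theorem stmt12 {Ω E : Type*} [MeasurableSpace Ω] [MeasurableSpace E]
    (P : Measure Ω) [IsProbabilityMeasure P] (m : Measure E) [IsProbabilityMeasure m]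
    (α : ℝ) (hα : 0 < α) (k : ℕ) (hk : 0 < k)
    (f : (Fin k → E) → ℝ≥0∞) (hfmeas : Measurable f)
    (hdiag : ∀ u : Fin k → E, (∃ i j : Fin k, i ≠ j ∧ u i = u j) → f u = 0)
    (Eseq : ℕ → Ω → ℝ) (T : ℕ → Ω → E)
    (hEmeas : ∀ j, Measurable (Eseq j)) (hTmeas : ∀ j, Measurable (T j))
    (hEindep : iIndepFun Eseq P)
    (hTindep : iIndepFun T P)
    (hET : IndepFun (fun ω j => Eseq j ω) (fun ω j => T j ω) P)
    (hExp : ∀ j, ∀ x : ℝ, 0 ≤ x →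
      P {ω | Eseq j ω ≤ x} = ENNReal.ofReal (1 - Real.exp (-x)))
    (hTlaw : ∀ j, Measure.map (T j) P = m)
    (Γ : ℕ → Ω → ℝ) (hΓ : ∀ j ω, Γ j ω = ∑ i ∈ Finset.range (j + 1), Eseq i ω) :
    P {ω | (⨆ j : {j : Fin k → ℕ // Function.Injective j},
        f (fun i => T (j.1 i) ω) *
          (∏ i, ENNReal.ofReal (Γ (j.1 i) ω)) ^ (-(1 / α))) < ⊤} = 0 ∨
    P {ω | (⨆ j : {j : Fin k → ℕ // Function.Injective j},
        f (fun i => T (j.1 i) ω) *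
          (∏ i, ENNReal.ofReal (Γ (j.1 i) ω)) ^ (-(1 / α))) < ⊤} = 1 := by
    classical
  -- the CDF of each `Eseq j`, now for all real `x`
  have hcdf : ∀ j x, P {ω | Eseq j ω ≤ x} = ENNReal.ofReal (1 - Real.exp (-x)) := by
    intro j x
    rcases le_or_gt 0 x with h | h
    · exact hExp j x h
    · have h0 : P {ω | Eseq j ω ≤ 0} = 0 := by
        rw [hExp j 0 le_rfl]; simp
      have h1 : P {ω | Eseq j ω ≤ x} = 0 :=
        le_antisymm (le_trans (measure_mono fun ω hω => le_trans hω h.le) h0.le) zero_le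
      rw [h1]
      symm
      rw [ENNReal.ofReal_eq_zero, sub_nonpos]
      exact Real.one_le_exp (by linarith)
  have hE0 : ∀ l, P {ω | Eseq l ω ≤ 0} = 0 := fun l => by rw [hcdf l 0]; simp
  -- the laws of the `Eseq j` all coincide
  haveI hprobE : ∀ i, IsProbabilityMeasure (P.map (Eseq i)) := fun i =>
    Measure.isProbabilityMeasure_map (hEmeas i).aemeasurable
  have hElaw : ∀ j, P.map (Eseq j) = P.map (Eseq 0) := by
    intro j
    refine Measure.ext_of_Iic (P.map (Eseq j)) (P.map (Eseq 0)) fun x => ?_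
    rw [Measure.map_apply (hEmeas j) measurableSet_Iic,
      Measure.map_apply (hEmeas 0) measurableSet_Iic]
    have e1 : Eseq j ⁻¹' (Set.Iic x) = {ω | Eseq j ω ≤ x} := rfl
    have e2 : Eseq 0 ⁻¹' (Set.Iic x) = {ω | Eseq 0 ω ≤ x} := rfl
    rw [e1, e2, hcdf j x, hcdf 0 x]
  -- pairwise independence of `Eseq l` and `T l`, and the common law of the pairs
  have hETl : ∀ l, IndepFun (Eseq l) (T l) P := fun l =>
    hET.comp (measurable_pi_apply l) (measurable_pi_apply l)
  have hXmeas : ∀ l, Measurable (fun ω => (Eseq l ω, T l ω)) := fun l =>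
    (hEmeas l).prodMk (hTmeas l)
  have hXlaw : ∀ l, P.map (fun ω => (Eseq l ω, T l ω)) = (P.map (Eseq 0)).prod m := by
    intro l
    rw [(indepFun_iff_map_prod_eq_prod_map_map (hEmeas l).aemeasurable
      (hTmeas l).aemeasurable).mp (hETl l), hElaw l, hTlaw l]
  -- the pairs form an independent family
  have hXindep : iIndepFun (fun l ω => (Eseq l ω, T l ω)) P := by
    rw [iIndepFun_iff_iIndep]
    set π : ℕ → Set (Set Ω) := fun l => {s | ∃ A : Set ℝ, ∃ B : Set E,
      MeasurableSet A ∧ MeasurableSet B ∧ s = Eseq l ⁻¹' A ∩ T l ⁻¹' B} with hπ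
    refine iIndepSets.iIndep (fun l => (hXmeas l).comap_le) π ?_ ?_ ?_
    · rintro l s ⟨A₁, B₁, hA₁, hB₁, rfl⟩ t ⟨A₂, B₂, hA₂, hB₂, rfl⟩ -
      refine ⟨A₁ ∩ A₂, B₁ ∩ B₂, hA₁.inter hA₂, hB₁.inter hB₂, ?_⟩
      ext ω
      simp only [Set.mem_inter_iff, Set.mem_preimage, Set.mem_inter_iff]
      tauto
    · intro l
      rw [show (Prod.instMeasurableSpace : MeasurableSpace (ℝ × E)) =
          MeasurableSpace.generateFrom (Set.image2 (· ×ˢ ·)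
            { s : Set ℝ | MeasurableSet s } { t : Set E | MeasurableSet t }) from
          generateFrom_prod.symm,
        MeasurableSpace.comap_generateFrom]
      congr 1
      ext s
      constructor
      · rintro ⟨u, ⟨A, hA, B, hB, rfl⟩, rfl⟩
        exact ⟨A, B, hA, hB, (Set.mk_preimage_prod _ _).symm⟩
      · rintro ⟨A, B, hA, hB, rfl⟩
        exact ⟨A ×ˢ B, ⟨A, hA, B, hB, rfl⟩, Set.mk_preimage_prod _ _⟩
    · rw [iIndepSets_iff]
      intro s F hF
      choose! A B hA hB hFeq using hF
      have hsplit : (⋂ i ∈ s, F i) =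
          ((fun ω l => Eseq l ω) ⁻¹' (s : Set ℕ).pi A) ∩
            ((fun ω l => T l ω) ⁻¹' (s : Set ℕ).pi B) := by
        ext ω
        simp only [Set.mem_iInter, Set.mem_inter_iff, Set.mem_preimage, Set.mem_pi,
          Finset.mem_coe]
        constructor
        · intro h
          constructor <;> intro i hi <;>
            · have h2 := h i hi
              rw [hFeq i hi] at h2
              first
                | exact h2.1
                | exact h2.2
        · rintro ⟨h1, h2⟩ i hi
          rw [hFeq i hi]
          exact ⟨h1 i hi, h2 i hi⟩
      have hmeasA : MeasurableSet ((s : Set ℕ).pi A) :=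
        MeasurableSet.pi (Finset.countable_toSet s) (fun i hi => hA i hi)
      have hmeasB : MeasurableSet ((s : Set ℕ).pi B) :=
        MeasurableSet.pi (Finset.countable_toSet s) (fun i hi => hB i hi)
      rw [hsplit, ProbabilityTheory.IndepFun.measure_inter_preimage_eq_mul hET _ _ hmeasA hmeasB]
      have hprE : (fun ω l => Eseq l ω) ⁻¹' (s : Set ℕ).pi A = ⋂ i ∈ s, Eseq i ⁻¹' A i := by
        ext ω; simp [Set.mem_pi]
      have hprT : (fun ω l => T l ω) ⁻¹' (s : Set ℕ).pi B = ⋂ i ∈ s, T i ⁻¹' B i := by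
        ext ω; simp [Set.mem_pi]
      rw [hprE, hprT,
        hEindep.measure_inter_preimage_eq_mul s (sets := A) (fun i hi => hA i hi),
        hTindep.measure_inter_preimage_eq_mul s (sets := B) (fun i hi => hB i hi),
        ← Finset.prod_mul_distrib]
      refine Finset.prod_congr rfl fun i hi => ?_
      rw [hFeq i hi]
      exact (ProbabilityTheory.IndepFun.measure_inter_preimage_eq_mul (hETl i) _ _ (hA i hi) (hB i hi)).symm
  -- push everything to the canonical space
  set Y : Ω → (ℕ → ℝ × E) := fun ω l => (Eseq l ω, T l ω) with hY
  have hYmeas : Measurable Y := measurable_pi_lambda _ hXmeas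
  set μ : Measure (ℕ → ℝ × E) := P.map Y with hμ
  haveI hμprob : IsProbabilityMeasure μ := Measure.isProbabilityMeasure_map hYmeas.aemeasurable
  have hcoordindep : iIndepFun (fun l (x : ℕ → ℝ × E) => x l) μ := by
    rw [iIndepFun_iff_measure_inter_preimage_eq_mul]
    intro s B hB
    have hbi : MeasurableSet (⋂ i ∈ s, (fun x : ℕ → ℝ × E => x i) ⁻¹' B i) :=
      MeasurableSet.biInter (Finset.countable_toSet s)
        (fun i hi => measurable_pi_apply i (hB i hi))
    rw [hμ, Measure.map_apply hYmeas hbi, Set.preimage_iInter₂]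
    have h1 : (⋂ i ∈ s, Y ⁻¹' ((fun x : ℕ → ℝ × E => x i) ⁻¹' B i)) =
        ⋂ i ∈ s, (fun ω => (Eseq i ω, T i ω)) ⁻¹' B i := rfl
    rw [h1, hXindep.measure_inter_preimage_eq_mul s hB]
    refine Finset.prod_congr rfl fun i hi => ?_
    rw [Measure.map_apply hYmeas (measurable_pi_apply i (hB i hi))]
    rfl
  have hmargaux : ∀ i, μ.map (fun x : ℕ → ℝ × E => x i) =
      P.map (fun ω => (Eseq i ω, T i ω)) := by
    intro i
    rw [hμ, Measure.map_map (measurable_pi_apply i) hYmeas]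
    rfl
  have hmarg : ∀ i, μ.map (fun x : ℕ → ℝ × E => x i) = μ.map (fun x => x 0) := by
    intro i
    rw [hmargaux i, hmargaux 0, hXlaw i, hXlaw 0]
  -- the canonical version of the supremum
  set G : (ℕ → ℝ × E) → ℝ≥0∞ := fun x =>
    ⨆ j : {j : Fin k → ℕ // Function.Injective j},
      f (fun i => (x (j.1 i)).2) *
        (∏ i, ENNReal.ofReal (∑ l ∈ Finset.range (j.1 i + 1), (x l).1)) ^ (-(1 / α)) with hG
  have hGmeas : Measurable G := by
    rw [hG]
    refine Measurable.iSup fun j => ?_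
    refine Measurable.mul ?_ ?_
    · exact hfmeas.comp (measurable_pi_lambda _ fun i =>
        measurable_snd.comp (measurable_pi_apply (j.1 i)))
    · refine Measurable.pow ?_ measurable_const
      refine Finset.measurable_prod _ fun i _ => ?_
      exact ENNReal.measurable_ofReal.comp
        (Finset.measurable_sum _ fun l _ => measurable_fst.comp (measurable_pi_apply l))
  set S : Set (ℕ → ℝ × E) := {x | G x < ⊤} with hS
  have hSmeas : MeasurableSet S := measurableSet_lt hGmeas measurable_const
  -- identification of the event
  have hGY : ∀ ω, G (Y ω) = ⨆ j : {j : Fin k → ℕ // Function.Injective j},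
      f (fun i => T (j.1 i) ω) * (∏ i, ENNReal.ofReal (Γ (j.1 i) ω)) ^ (-(1 / α)) := by
    intro ω
    simp only [hG, hY, hΓ]
  have hAeq : {ω | (⨆ j : {j : Fin k → ℕ // Function.Injective j},
      f (fun i => T (j.1 i) ω) *
        (∏ i, ENNReal.ofReal (Γ (j.1 i) ω)) ^ (-(1 / α))) < ⊤} = Y ⁻¹' S := by
    ext ω
    simp only [Set.mem_setOf_eq, Set.mem_preimage, hS, hGY ω]
  have hPA : P {ω | (⨆ j : {j : Fin k → ℕ // Function.Injective j},
      f (fun i => T (j.1 i) ω) *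
        (∏ i, ENNReal.ofReal (Γ (j.1 i) ω)) ^ (-(1 / α))) < ⊤} = μ S := by
    rw [hAeq, hμ, Measure.map_apply hYmeas hSmeas]
  -- the coordinates are a.s. positive in the first component
  have hN : μ (⋃ l, {x : ℕ → ℝ × E | (x l).1 ≤ 0}) = 0 := by
    refine measure_iUnion_null fun l => ?_
    have hml : MeasurableSet {x : ℕ → ℝ × E | (x l).1 ≤ 0} :=
      measurableSet_le (measurable_fst.comp (measurable_pi_apply l)) measurable_const
    rw [hμ, Measure.map_apply hYmeas hml]
    exact hE0 l
  -- a.s. invariance of `S` under block swaps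
  have hinv : ∀ n, 0 < n → μ (S ∆ ((fun x => x ∘ blockSwap n) ⁻¹' S)) = 0 := by
    intro n hn
    refine measure_mono_null ?_ hN
    intro x hx
    by_contra hxN
    simp only [Set.mem_iUnion, Set.mem_setOf_eq, not_exists, not_le] at hxN
    have hposy : ∀ l, 0 < ((x ∘ blockSwap n) l).1 := fun l => hxN _
    obtain ⟨K, hK, hcomp⟩ := lepage_comparison α hα k f n hn x hxN
    obtain ⟨K', hK', hcomp'⟩ := lepage_comparison α hα k f n hn (x ∘ blockSwap n) hposy
    have hyx : (x ∘ blockSwap n) ∘ blockSwap n = x :=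
      funext fun l => congrArg x (blockSwap_involutive n l)
    have h1 : G (x ∘ blockSwap n) ≤ K * G x := by
      simp only [hG]; exact hcomp
    have h2 : G x ≤ K' * G (x ∘ blockSwap n) := by
      rw [hyx] at hcomp'
      simp only [hG]; exact hcomp'
    rw [Set.mem_symmDiff] at hx
    rcases hx with ⟨hxS, hxn⟩ | ⟨hxS, hxn⟩
    · refine hxn ?_
      have hxlt : G x < ⊤ := hxS
      have : G (x ∘ blockSwap n) < ⊤ :=
        lt_of_le_of_lt h1 (ENNReal.mul_lt_top hK.lt_top hxlt)
      exact this
    · refine hxn ?_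
      have hxlt : G (x ∘ blockSwap n) < ⊤ := hxS
      have : G x < ⊤ := lt_of_le_of_lt h2 (ENNReal.mul_lt_top hK'.lt_top hxlt)
      exact this
  -- apply the Hewitt–Savage argument
  rcases hewittSavage μ hcoordindep hmarg S hSmeas hinv with h | h
  · left; rw [hPA]; exact h
  · right; rw [hPA]; exact h
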